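/- arXiv:1805.01254 — 3 statements merged into one kernel-verified Lean document; each statement's English description precedes it below -/
import Mathlib

section
/- Let n ≥ 1 and let ω be a primitive complex n-th root of unity. Then ∑_{i=1}^{n−1} 1/(ω^i − 1) = −(n−1)/2 and ∑_{i=1}^{n−1} 1/(ω^i − 1)² = −(n−1)(n−5)/12. -/
open Finset

lemma sum_cast_range_c (n : ℕ) :
    ∑ k ∈ Finset.range n, (k : ℂ) = (n : ℂ) * ((n : ℂ) - 1) / 2 := by
  induction n with
  | zero => simp
  | succ m ih =>
    rw [Finset.sum_range_succ, ih]
    push_cast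
    ring

lemma sum_sq_range_c (n : ℕ) :
    ∑ k ∈ Finset.range n, (k : ℂ) ^ 2
      = (n : ℂ) * ((n : ℂ) - 1) * (2 * (n : ℂ) - 1) / 6 := by
  induction n with
  | zero => simp
  | succ m ih =>
    rw [Finset.sum_range_succ, ih]
    push_cast
    ring

lemma tel1_c (x : ℂ) (m : ℕ) :
    (x - 1) * ∑ k ∈ Finset.range m, (k : ℂ) * x ^ k
      = ((m : ℂ) - 1) * x ^ m - (∑ k ∈ Finset.range m, x ^ k) + 1 := by
  induction m with
  | zero => simp
  | succ m ih =>
    rw [Finset.sum_range_succ, Finset.sum_range_succ (f := fun k => x ^ k)]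
    push_cast
    linear_combination ih

lemma tel2_c (x : ℂ) (m : ℕ) :
    (x - 1) * ∑ k ∈ Finset.range m, (k : ℂ) ^ 2 * x ^ k
      = ((m : ℂ) - 1) ^ 2 * x ^ m
        - 2 * (∑ k ∈ Finset.range m, (k : ℂ) * x ^ k)
        + (∑ k ∈ Finset.range m, x ^ k) - 1 := by
  induction m with
  | zero => simp
  | succ m ih =>
    rw [Finset.sum_range_succ, Finset.sum_range_succ (f := fun k => (k : ℂ) * x ^ k),
      Finset.sum_range_succ (f := fun k => x ^ k)]
    push_cast
    linear_combination ih


lemma inv_id_c (n : ℕ) (x : ℂ) (hn0 : (n : ℂ) ≠ 0) (hxn : x ^ n = 1) (hx1 : x ≠ 1) :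
    (x - 1)⁻¹ = (∑ k ∈ Finset.range n, (k : ℂ) * x ^ k) / n
    ∧ ((x - 1)⁻¹) ^ 2
      = (((n : ℂ) - 2) * (∑ k ∈ Finset.range n, (k : ℂ) * x ^ k)
          - ∑ k ∈ Finset.range n, (k : ℂ) ^ 2 * x ^ k) / (2 * n) := by
  have hx1' : x - 1 ≠ 0 := sub_ne_zero.mpr hx1
  have hg : (∑ k ∈ Finset.range n, x ^ k) = 0 := by
    have := geom_sum_mul x n
    rw [hxn, sub_self] at this
    exact (mul_eq_zero.mp this).resolve_right hx1'
  have ht1 : (x - 1) * ∑ k ∈ Finset.range n, (k : ℂ) * x ^ k = n := by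
    rw [tel1_c, hxn, hg]; ring
  have ht2 : (x - 1) * ∑ k ∈ Finset.range n, (k : ℂ) ^ 2 * x ^ k
      = ((n : ℂ) - 1) ^ 2 - 2 * (∑ k ∈ Finset.range n, (k : ℂ) * x ^ k) - 1 := by
    rw [tel2_c, hxn, hg]; ring
  set t1 := ∑ k ∈ Finset.range n, (k : ℂ) * x ^ k with ht1d
  set t2 := ∑ k ∈ Finset.range n, (k : ℂ) ^ 2 * x ^ k with ht2d
  have hfirst : (x - 1)⁻¹ = t1 / n := by
    field_simp
    linear_combination -ht1
  have hE : (x - 1) ^ 2 * (2 * t1 ^ 2 - (n : ℂ) * ((n : ℂ) - 2) * t1 + (n : ℂ) * t2) = 0 := by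
    linear_combination (2 * ((x - 1) * t1 - (n : ℂ)) + 4 * (n : ℂ)
      - (n : ℂ) * ((n : ℂ) - 2) * (x - 1) - 2 * (n : ℂ)) * ht1 + (n : ℂ) * (x - 1) * ht2
  have hE0 : 2 * t1 ^ 2 - (n : ℂ) * ((n : ℂ) - 2) * t1 + (n : ℂ) * t2 = 0 :=
    (mul_eq_zero.mp hE).resolve_left (pow_ne_zero 2 hx1')
  refine ⟨hfirst, ?_⟩
  have h2n : (2 * (n : ℂ)) ≠ 0 := mul_ne_zero two_ne_zero hn0
  rw [hfirst, div_pow, div_eq_div_iff (pow_ne_zero 2 hn0) h2n]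
  linear_combination (n : ℂ) * hE0

/-- For a primitive complex `n`-th root of unity `ω`,
`∑_{i=1}^{n-1} 1/(ω^i - 1) = -(n-1)/2` and `∑_{i=1}^{n-1} 1/(ω^i - 1)² = -(n-1)(n-5)/12`. -/
theorem stmt17 (n : ℕ) (hn : 1 ≤ n) (ω : ℂ) (hω : IsPrimitiveRoot ω n) :
    (∑ i ∈ Finset.Ico 1 n, (ω ^ i - 1)⁻¹) = -((n : ℂ) - 1) / 2
    ∧ (∑ i ∈ Finset.Ico 1 n, ((ω ^ i - 1)⁻¹) ^ 2) = -((n : ℂ) - 1) * ((n : ℂ) - 5) / 12 := by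
  have hn0 : (n : ℂ) ≠ 0 := Nat.cast_ne_zero.mpr (by omega)
  -- per-index identities
  have key : ∀ i ∈ Finset.Ico 1 n,
      (ω ^ i - 1)⁻¹ = (∑ k ∈ Finset.range n, (k : ℂ) * (ω ^ i) ^ k) / n
      ∧ ((ω ^ i - 1)⁻¹) ^ 2
        = (((n : ℂ) - 2) * (∑ k ∈ Finset.range n, (k : ℂ) * (ω ^ i) ^ k)
            - ∑ k ∈ Finset.range n, (k : ℂ) ^ 2 * (ω ^ i) ^ k) / (2 * n) := by
    intro i hi
    simp only [Finset.mem_Ico] at hi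
    have hxn : (ω ^ i) ^ n = 1 := by
      rw [← pow_mul, mul_comm, pow_mul, hω.pow_eq_one, one_pow]
    exact inv_id_c n (ω ^ i) hn0 hxn (hω.pow_ne_one_of_pos_of_lt (Nat.one_le_iff_ne_zero.mp hi.1) hi.2)
  -- inner geometric sums over i
  have hc : ∀ k ∈ Finset.range n, k ≠ 0 →
      (∑ i ∈ Finset.Ico 1 n, (ω ^ k) ^ i) = -1 := by
    intro k hk hk0
    simp only [Finset.mem_range] at hk
    have hy1 : ω ^ k ≠ 1 := hω.pow_ne_one_of_pos_of_lt hk0 hk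
    have hyn : (ω ^ k) ^ n = 1 := by
      rw [← pow_mul, mul_comm, pow_mul, hω.pow_eq_one, one_pow]
    have hg : (∑ i ∈ Finset.range n, (ω ^ k) ^ i) = 0 := by
      have := geom_sum_mul (ω ^ k) n
      rw [hyn, sub_self] at this
      exact (mul_eq_zero.mp this).resolve_right (sub_ne_zero.mpr hy1)
    have hsplit := Finset.sum_eq_sum_Ico_succ_bot (Nat.lt_of_lt_of_le Nat.zero_lt_one hn)
      (fun i => (ω ^ k) ^ i)
    rw [← Finset.range_eq_Ico] at hsplit
    rw [hsplit, pow_zero] at hg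
    linear_combination hg
  -- the two double sums
  have hA : (∑ i ∈ Finset.Ico 1 n, ∑ k ∈ Finset.range n, (k : ℂ) * (ω ^ i) ^ k)
      = -((n : ℂ) * ((n : ℂ) - 1) / 2) := by
    calc (∑ i ∈ Finset.Ico 1 n, ∑ k ∈ Finset.range n, (k : ℂ) * (ω ^ i) ^ k)
        = ∑ i ∈ Finset.Ico 1 n, ∑ k ∈ Finset.range n, (k : ℂ) * (ω ^ k) ^ i := by
          refine Finset.sum_congr rfl fun i _ => Finset.sum_congr rfl fun k _ => ?_
          rw [← pow_mul, ← pow_mul, mul_comm i k]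
      _ = ∑ k ∈ Finset.range n, ∑ i ∈ Finset.Ico 1 n, (k : ℂ) * (ω ^ k) ^ i :=
          Finset.sum_comm
      _ = ∑ k ∈ Finset.range n, (k : ℂ) * ∑ i ∈ Finset.Ico 1 n, (ω ^ k) ^ i := by
          simp [Finset.mul_sum]
      _ = ∑ k ∈ Finset.range n, -(k : ℂ) := by
          refine Finset.sum_congr rfl fun k hk => ?_
          rcases eq_or_ne k 0 with h | h
          · simp [h]
          · rw [hc k hk h]; ring
      _ = -((n : ℂ) * ((n : ℂ) - 1) / 2) := by
          rw [Finset.sum_neg_distrib, sum_cast_range_c]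
  have hB : (∑ i ∈ Finset.Ico 1 n, ∑ k ∈ Finset.range n, (k : ℂ) ^ 2 * (ω ^ i) ^ k)
      = -((n : ℂ) * ((n : ℂ) - 1) * (2 * (n : ℂ) - 1) / 6) := by
    calc (∑ i ∈ Finset.Ico 1 n, ∑ k ∈ Finset.range n, (k : ℂ) ^ 2 * (ω ^ i) ^ k)
        = ∑ i ∈ Finset.Ico 1 n, ∑ k ∈ Finset.range n, (k : ℂ) ^ 2 * (ω ^ k) ^ i := by
          refine Finset.sum_congr rfl fun i _ => Finset.sum_congr rfl fun k _ => ?_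
          rw [← pow_mul, ← pow_mul, mul_comm i k]
      _ = ∑ k ∈ Finset.range n, ∑ i ∈ Finset.Ico 1 n, (k : ℂ) ^ 2 * (ω ^ k) ^ i :=
          Finset.sum_comm
      _ = ∑ k ∈ Finset.range n, (k : ℂ) ^ 2 * ∑ i ∈ Finset.Ico 1 n, (ω ^ k) ^ i := by
          simp [Finset.mul_sum]
      _ = ∑ k ∈ Finset.range n, -((k : ℂ) ^ 2) := by
          refine Finset.sum_congr rfl fun k hk => ?_
          rcases eq_or_ne k 0 with h | h
          · simp [h]
          · rw [hc k hk h]; ring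
      _ = -((n : ℂ) * ((n : ℂ) - 1) * (2 * (n : ℂ) - 1) / 6) := by
          rw [Finset.sum_neg_distrib, sum_sq_range_c]
  constructor
  · rw [Finset.sum_congr rfl fun i hi => (key i hi).1, ← Finset.sum_div, hA]
    field_simp
  · rw [Finset.sum_congr rfl fun i hi => (key i hi).2, ← Finset.sum_div,
      Finset.sum_sub_distrib, ← Finset.mul_sum, hA, hB]
    field_simp
    ring
end

section
/- Let f ∈ ℤ[[u]] be a formal power series with constant term f(0) = 1. Then the integer sequence a_n = [u^n] f(u)^n (the coefficient of u^n in the n-th power of f) satisfies the Gauss congruences: for all positive integers n, ∑_{d|n} μ(d) a_{n/d} ≡ 0 mod n. -/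
open Finset

/-- Powers of power series that agree up to degree `n` agree up to degree `n`. -/
lemma aux_coeff_pow_agree (f g : PowerSeries ℤ) (n : ℕ)
    (h : ∀ j ≤ n, PowerSeries.coeff j f = PowerSeries.coeff j g) :
    ∀ e : ℕ, ∀ j ≤ n, PowerSeries.coeff j (f ^ e) = PowerSeries.coeff j (g ^ e) := by
  intro e
  induction e with
  | zero => intro j _; simp
  | succ e ih =>
    intro j hj
    rw [pow_succ, pow_succ, PowerSeries.coeff_mul, PowerSeries.coeff_mul]
    refine Finset.sum_congr rfl fun x hx => ?_
    rw [Finset.HasAntidiagonal.mem_antidiagonal] at hx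
    have h1 : x.1 ≤ n := le_trans (by omega) hj
    have h2 : x.2 ≤ n := le_trans (by omega) hj
    rw [ih x.1 h1, h x.2 h2]

/-- Frobenius congruence for integer polynomials. -/
lemma aux_poly_frob (P : Polynomial ℤ) {p : ℕ} (hp : p.Prime) :
    (p : Polynomial ℤ) ∣ P ^ p - Polynomial.expand ℤ p P := by
  haveI : Fact p.Prime := ⟨hp⟩
  have h : (Polynomial.C (p : ℤ)) ∣ P ^ p - Polynomial.expand ℤ p P := by
    rw [Polynomial.C_dvd_iff_dvd_coeff]
    intro i
    have hmap : Polynomial.map (Int.castRingHom (ZMod p)) (P ^ p - Polynomial.expand ℤ p P)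
        = 0 := by
      rw [Polynomial.map_sub, Polynomial.map_pow, Polynomial.map_expand]
      rw [← Polynomial.map_frobenius_expand p (Polynomial.map (Int.castRingHom (ZMod p)) P),
        ZMod.frobenius_zmod, Polynomial.map_id, sub_self]
    have := congrArg (fun q => Polynomial.coeff q i) hmap
    simp only [Polynomial.coeff_map, Polynomial.coeff_zero] at this
    exact (ZMod.intCast_zmod_eq_zero_iff_dvd _ p).mp this
  simpa using h

/-- Key congruence for coefficients of powers of an integer polynomial. -/
lemma aux_poly_key (P : Polynomial ℤ) {p : ℕ} (hp : p.Prime) (k m : ℕ) :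
    ((p : ℤ)) ^ (k + 1) ∣ (P ^ (p ^ (k + 1) * m)).coeff (p ^ (k + 1) * m)
      - (P ^ (p ^ k * m)).coeff (p ^ k * m) := by
  haveI : Fact p.Prime := ⟨hp⟩
  have h1 := aux_poly_frob P hp
  have h2 := dvd_sub_pow_of_dvd_sub h1 k
  -- h2 : (p^(k+1) : ℤ[X]) ∣ (P^p)^(p^k) - (expand ℤ p P)^(p^k)
  have h3 : ((p : Polynomial ℤ)) ^ (k + 1) ∣
      ((P ^ p) ^ (p ^ k)) ^ m - ((Polynomial.expand ℤ p P) ^ (p ^ k)) ^ m :=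
    dvd_trans h2 (sub_dvd_pow_sub_pow _ _ m)
  have hA : ((P ^ p) ^ (p ^ k)) ^ m = P ^ (p ^ (k + 1) * m) := by
    rw [← pow_mul, ← pow_mul, pow_succ, mul_comm (p ^ k) p, mul_assoc]
  have hB : ((Polynomial.expand ℤ p P) ^ (p ^ k)) ^ m
      = Polynomial.expand ℤ p (P ^ (p ^ k * m)) := by
    rw [← pow_mul, ← map_pow]
  rw [hA, hB] at h3
  have h4 : (Polynomial.C ((p : ℤ) ^ (k + 1))) ∣
      P ^ (p ^ (k + 1) * m) - Polynomial.expand ℤ p (P ^ (p ^ k * m)) := by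
    simpa [map_pow] using h3
  rw [Polynomial.C_dvd_iff_dvd_coeff] at h4
  have h5 := h4 (p ^ (k + 1) * m)
  rw [Polynomial.coeff_sub, show p ^ (k + 1) * m = p * (p ^ k * m) from by ring,
    Polynomial.coeff_expand_mul' hp.pos] at h5
  rw [show p ^ (k + 1) * m = p * (p ^ k * m) from by ring]
  exact h5

/-- Key congruence for the power-series sequence. -/
lemma aux_ps_key (f : PowerSeries ℤ) {p : ℕ} (hp : p.Prime) (k m : ℕ) :
    ((p : ℤ)) ^ (k + 1) ∣ PowerSeries.coeff (p ^ (k + 1) * m) (f ^ (p ^ (k + 1) * m))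
      - PowerSeries.coeff (p ^ k * m) (f ^ (p ^ k * m)) := by
  set n := p ^ (k + 1) * m with hn
  set P := PowerSeries.trunc (n + 1) f with hP
  have hagree : ∀ j ≤ n, PowerSeries.coeff j f
      = PowerSeries.coeff j ((P : Polynomial ℤ) : PowerSeries ℤ) := by
    intro j hj
    rw [hP, PowerSeries.coeff_coe_trunc_of_lt (by omega)]
  have key := aux_coeff_pow_agree f ((P : Polynomial ℤ) : PowerSeries ℤ) n hagree
  have hle : p ^ k * m ≤ n := by
    rw [hn]
    exact Nat.mul_le_mul_right m (Nat.pow_le_pow_right hp.pos (Nat.le_succ k))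
  have e1 : PowerSeries.coeff n (f ^ n) = (P ^ n).coeff n := by
    rw [key n n le_rfl, ← Polynomial.coe_pow, Polynomial.coeff_coe]
  have e2 : PowerSeries.coeff (p ^ k * m) (f ^ (p ^ k * m))
      = (P ^ (p ^ k * m)).coeff (p ^ k * m) := by
    rw [key (p ^ k * m) (p ^ k * m) hle, ← Polynomial.coe_pow, Polynomial.coeff_coe]
  rw [e1, e2]
  exact aux_poly_key P hp k m

/-- Reduction of Gauss congruences to prime-power congruences. -/
lemma aux_gauss_reduce (a : ℕ → ℤ)
    (H : ∀ p k m : ℕ, p.Prime →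
      ((p : ℤ)) ^ (k + 1) ∣ a (p ^ (k + 1) * m) - a (p ^ k * m)) :
    ∀ n : ℕ, 0 < n → (n : ℤ) ∣ ∑ d ∈ n.divisors, ArithmeticFunction.moebius d * a (n / d) := by
  intro n hn
  have hn0 : n ≠ 0 := hn.ne'
  have hnat : ∏ q ∈ n.primeFactors, q ^ n.factorization q = n :=
    Nat.factorization_prod_pow_eq_self hn0
  have hfact : (∏ q ∈ n.primeFactors, (q : ℤ) ^ n.factorization q) = (n : ℤ) := by
    exact_mod_cast hnat
  rw [← hfact]
  apply Finset.prod_dvd_of_coprime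
  · intro q hq r hr hqr
    have hq' := Nat.prime_of_mem_primeFactors hq
    have hr' := Nat.prime_of_mem_primeFactors hr
    exact (IsCoprime.pow (Nat.isCoprime_iff_coprime.mpr
      ((Nat.coprime_primes hq' hr').mpr hqr)))
  · intro p hpmem
    have hp : p.Prime := Nat.prime_of_mem_primeFactors hpmem
    have hpdvd : p ∣ n := Nat.dvd_of_mem_primeFactors hpmem
    obtain ⟨k, hk⟩ : ∃ k, n.factorization p = k + 1 :=
      ⟨n.factorization p - 1, (Nat.succ_pred_eq_of_pos
        (hp.factorization_pos_of_dvd hn0 hpdvd)).symm⟩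
    rw [hk]
    set m : ℕ := n / p ^ (k + 1) with hm
    have hsplit : p ^ (k + 1) * m = n := by
      rw [hm, ← hk]; exact Nat.ordProj_mul_ordCompl_eq_self n p
    have hpm : ¬ p ∣ m := by
      rw [hm, ← hk]; exact Nat.not_dvd_ordCompl hp hn0
    have hm0 : m ≠ 0 := by
      intro h; rw [h, mul_zero] at hsplit; exact hn0 hsplit.symm
    -- the relevant subset of divisors
    set T : Finset ℕ := m.divisors ∪ m.divisors.image (p * ·) with hT
    have hTsub : T ⊆ n.divisors := by
      intro d hd
      rw [hT, Finset.mem_union] at hd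
      rcases hd with hd | hd
      · rw [Nat.mem_divisors] at hd ⊢
        exact ⟨hd.1.trans ⟨p ^ (k + 1), by rw [← hsplit]; ring⟩, hn0⟩
      · rw [Finset.mem_image] at hd
        obtain ⟨e, he, rfl⟩ := hd
        rw [Nat.mem_divisors] at he ⊢
        refine ⟨?_, hn0⟩
        obtain ⟨c, hc⟩ := he.1
        exact ⟨p ^ k * c, by rw [← hsplit, hc]; ring⟩
    have hzero : ∀ d ∈ n.divisors, d ∉ T →
        (ArithmeticFunction.moebius d : ℤ) * a (n / d) = 0 := by
      intro d hd hdT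
      rw [Nat.mem_divisors] at hd
      by_cases hpd : p ∣ d
      · obtain ⟨e, rfl⟩ := hpd
        by_cases hpe : p ∣ e
        · have hnsq : ¬ Squarefree (p * e) := fun hsq =>
            hp.not_isUnit (hsq p (mul_dvd_mul_left p hpe))
          rw [ArithmeticFunction.moebius_eq_zero_of_not_squarefree hnsq]
          simp
        · -- e ∣ m, so p * e ∈ T, contradiction
          exfalso
          apply hdT
          have hedvd : e ∣ m := by
            have h1 : p * e ∣ p * (p ^ k * m) := by
              rw [show p * (p ^ k * m) = p ^ (k + 1) * m by ring, hsplit]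
              exact hd.1
            have h2 : e ∣ p ^ k * m :=
              (mul_dvd_mul_iff_left (hp.pos.ne' : p ≠ 0)).mp h1
            have hcop : Nat.Coprime e (p ^ k) :=
              Nat.Coprime.pow_right k (hp.coprime_iff_not_dvd.mpr hpe).symm
            exact hcop.dvd_of_dvd_mul_left h2
          rw [hT, Finset.mem_union, Finset.mem_image]
          exact Or.inr ⟨e, Nat.mem_divisors.mpr ⟨hedvd, hm0⟩, rfl⟩
      · -- p ∤ d : d ∣ m
        exfalso
        apply hdT
        have hdm : d ∣ m := by
          have hcop : Nat.Coprime d (p ^ (k + 1)) :=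
            Nat.Coprime.pow_right _ ((hp.coprime_iff_not_dvd.mpr hpd).symm)
          exact hcop.dvd_of_dvd_mul_left (by rw [hsplit]; exact hd.1)
        rw [hT, Finset.mem_union]
        exact Or.inl (Nat.mem_divisors.mpr ⟨hdm, hm0⟩)
    rw [← Finset.sum_subset hTsub hzero]
    have hdisj : Disjoint m.divisors (m.divisors.image (p * ·)) := by
      rw [Finset.disjoint_left]
      intro d hd hd'
      rw [Finset.mem_image] at hd'
      obtain ⟨e, _, rfl⟩ := hd'
      exact hpm ((dvd_mul_right p e).trans (Nat.mem_divisors.mp hd).1)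
    rw [hT, Finset.sum_union hdisj,
      Finset.sum_image (fun e _ e' _ h => Nat.eq_of_mul_eq_mul_left hp.pos h),
      ← Finset.sum_add_distrib]
    apply Finset.dvd_sum
    intro e he
    rw [Nat.mem_divisors] at he
    have hpe : ¬ p ∣ e := fun h => hpm (h.trans he.1)
    have hmoeb : ArithmeticFunction.moebius (p * e)
        = - ArithmeticFunction.moebius e := by
      rw [ArithmeticFunction.isMultiplicative_moebius.map_mul_of_coprime
        (hp.coprime_iff_not_dvd.mpr hpe), ArithmeticFunction.moebius_apply_prime hp]
      ring
    have hne : n / e = p ^ (k + 1) * (m / e) := by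
      rw [← hsplit, Nat.mul_div_assoc _ he.1]
    have hnpe : n / (p * e) = p ^ k * (m / e) := by
      rw [← hsplit, show p ^ (k + 1) * m = p * (p ^ k * m) by ring,
        Nat.mul_div_mul_left _ _ hp.pos, Nat.mul_div_assoc _ he.1]
    rw [hmoeb, hne, hnpe]
    have hterm : (ArithmeticFunction.moebius e : ℤ) * a (p ^ (k + 1) * (m / e))
        + (- ArithmeticFunction.moebius e : ℤ) * a (p ^ k * (m / e))
        = (ArithmeticFunction.moebius e : ℤ)
          * (a (p ^ (k + 1) * (m / e)) - a (p ^ k * (m / e))) := by ring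
    rw [hterm]
    exact Dvd.dvd.mul_left (H p k (m / e) hp) _

/-- If `f ∈ ℤ[[u]]` has constant term `1`, then `a_n = [u^n] f(u)^n` satisfies the Gauss
congruences: for all `n ≥ 1`, `∑_{d ∣ n} μ(d) a_{n/d} ≡ 0 mod n`. -/
theorem stmt18 (f : PowerSeries ℤ) (hf : PowerSeries.constantCoeff f = 1) :
    ∀ n : ℕ, 0 < n →
      (n : ℤ) ∣ ∑ d ∈ n.divisors,
        ArithmeticFunction.moebius d * PowerSeries.coeff (n / d) (f ^ (n / d)) := by
  exact aux_gauss_reduce (fun e => PowerSeries.coeff e (f ^ e))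
    (fun p k m hp => aux_ps_key f hp k m)
end

section
/- Let {a_n(q)}_{n≥1} ⊆ ℤ[q] be a sequence satisfying the q-Gauss congruences. Suppose that for all n ≥ 1 and every n-th root of unity ω, ω·a_n′(ω) = ord(ω)² · a′_{n/ord(ω)}(1), and that there exist sequences (b_n), (c_n) of complex numbers such that ω²·a_n″(ω) = ord(ω)⁴ · b_{n/ord(ω)} + ord(ω)² · c_{n/ord(ω)} for all n ≥ 1 and ω ∈ μ_n. Then for every prime p ≥ 5 and every n ≥ 1, a_{np}(q) − a_n(q^{p²}) ≡ −(q^p − 1)² · ((p² − 1)/2) · (c_n + a_n′(1)) mod [p]_q³; in particular a_{np}(1) ≡ a_n(1) mod p³. -/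
open Polynomial Finset

/-- The `q`-analogue `[n]_q = 1 + q + ⋯ + q^{n-1}` in `ℤ[q]`. -/
noncomputable def qInt (n : ℕ) : Polynomial ℤ := ∑ i ∈ Finset.range n, X ^ i

/-- The `q`-analogue `[n]_q` in `ℂ[q]`. -/
noncomputable def qIntC (n : ℕ) : Polynomial ℂ := ∑ i ∈ Finset.range n, X ^ i

/-- A sequence `{a_n(q)}_{n ≥ 1} ⊆ ℤ[q]` satisfies the `q`-Gauss congruences if for all `n ≥ 1`,
`∑_{d ∣ n} μ(d) a_{n/d}(q^d) ≡ 0 mod [n]_q`. -/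
def qGauss (a : ℕ → Polynomial ℤ) : Prop :=
  ∀ n : ℕ, 0 < n →
    qInt n ∣ ∑ d ∈ n.divisors,
      Polynomial.C (ArithmeticFunction.moebius d) * ((a (n / d)).comp (X ^ d))

lemma aeval_eq_eval_map (Q : Polynomial ℤ) (z : ℂ) :
    Polynomial.aeval z Q = (Q.map (Int.castRingHom ℂ)).eval z := by
  rw [aeval_def, eval_map, algebraMap_int_eq]

lemma map_eval_one (Q : Polynomial ℤ) :
    (Q.map (Int.castRingHom ℂ)).eval 1 = ((Q.eval 1 : ℤ) : ℂ) := by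
  rw [eval_map, eval₂_at_one]
  rfl

lemma geom_sum_root {p : ℕ} {z : ℂ} (hz : z ^ p = 1) (h1 : z ≠ 1) :
    ∑ i ∈ Finset.range p, z ^ i = 0 := by
  rw [geom_sum_eq h1, hz, sub_self, zero_div]

lemma qIntC_eval (p : ℕ) (z : ℂ) : (qIntC p).eval z = ∑ i ∈ Finset.range p, z ^ i := by
  simp [qIntC]

lemma cube_dvd {F : Polynomial ℂ} {z : ℂ} (e0 : F.eval z = 0)
    (e1 : (derivative F).eval z = 0) (e2 : (derivative (derivative F)).eval z = 0) :
    (X - C z) ^ 3 ∣ F := by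
  obtain ⟨F1, rfl⟩ := (dvd_iff_isRoot).mpr e0
  have hF1 : F1.eval z = 0 := by
    simpa [derivative_mul] using e1
  obtain ⟨F2, rfl⟩ := (dvd_iff_isRoot).mpr hF1
  have hF2 : F2.eval z = 0 := by
    have h2 : (2:ℂ) * F2.eval z = 0 := by
      simpa [derivative_mul] using e2
    have := mul_eq_zero.mp h2
    simpa using this
  obtain ⟨F3, rfl⟩ := (dvd_iff_isRoot).mpr hF2
  exact ⟨F3, by ring⟩

lemma eval_d_comp_pow (u : Polynomial ℂ) (m : ℕ) (z : ℂ) :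
    (derivative (u.comp (X ^ m))).eval z
      = (m : ℂ) * z ^ (m - 1) * (derivative u).eval (z ^ m) := by
  rw [derivative_comp, derivative_X_pow]
  simp [eval_comp]

lemma eval_dd_comp_pow (u : Polynomial ℂ) (m : ℕ) (z : ℂ) :
    (derivative (derivative (u.comp (X ^ m)))).eval z
      = (m : ℂ) * ((m - 1 : ℕ) : ℂ) * z ^ (m - 2) * (derivative u).eval (z ^ m)
        + (m : ℂ) ^ 2 * (z ^ (m - 1) * z ^ (m - 1))
            * (derivative (derivative u)).eval (z ^ m) := by
  rw [derivative_comp, derivative_X_pow, derivative_mul, derivative_comp, derivative_X_pow]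
  have h : derivative (C (m : ℂ) * X ^ (m - 1))
      = C (m : ℂ) * (C ((m - 1 : ℕ) : ℂ) * X ^ (m - 1 - 1)) := by
    rw [derivative_C_mul, derivative_X_pow]
  rw [h, Nat.sub_sub]
  simp [eval_comp]
  ring

lemma pow_helper {z : ℂ} {m : ℕ} (hm : 2 ≤ m) (hz : z ^ m = 1) :
    z ^ 2 * z ^ (m - 2) = 1 ∧ z * z ^ (m - 1) = 1
      ∧ z ^ 2 * (z ^ (m - 1) * z ^ (m - 1)) = 1 := by
  refine ⟨?_, ?_, ?_⟩
  · rw [← pow_add, show 2 + (m - 2) = m by omega, hz]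
  · rw [← pow_succ', show m - 1 + 1 = m by omega, hz]
  · rw [← pow_add, ← pow_add, show 2 + (m - 1 + (m - 1)) = m + m by omega, pow_add, hz, one_mul]

lemma P3_dd (p : ℕ) (hp : 1 ≤ p) (K z : ℂ) (hzp : z ^ p = 1) :
    z ^ 2 * (derivative (derivative (-(X ^ p - 1) ^ 2 * C K))).eval z = -2 * (p:ℂ)^2 * K := by
  have hzz : z ^ (p - 1) * z ^ (p - 1) * z ^ 2 = 1 := by
    rw [← pow_add, ← pow_add, show p - 1 + (p - 1) + 2 = 2 * p by omega, mul_comm, pow_mul, hzp,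
      one_pow]
  simp only [derivative_mul, derivative_neg, derivative_pow, derivative_sub, derivative_X_pow,
    derivative_one, derivative_C, derivative_X, mul_zero, add_zero, sub_zero, zero_mul, zero_add,
    derivative_C_mul, derivative_ofNat]
  simp only [eval_mul, eval_neg, eval_add, eval_sub, eval_pow, eval_one, eval_X, eval_C,
    eval_natCast, eval_ofNat, eval_zero]
  rw [hzp]
  generalize hgen : z ^ (p - 1) = w at hzz ⊢
  linear_combination (-2*(p:ℂ)^2*K) * hzz

lemma P3_d (p : ℕ) (K z : ℂ) (hzp : z ^ p = 1) :
    (derivative (-(X ^ p - 1) ^ 2 * C K)).eval z = 0 := by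
  simp only [derivative_mul, derivative_neg, derivative_pow, derivative_sub, derivative_X_pow,
    derivative_one, derivative_C, derivative_X, mul_zero, add_zero, sub_zero, zero_mul, zero_add,
    derivative_C_mul, derivative_ofNat]
  simp only [eval_mul, eval_neg, eval_add, eval_sub, eval_pow, eval_one, eval_X, eval_C,
    eval_natCast, eval_ofNat, eval_zero]
  rw [hzp]
  ring

lemma P3_e (p : ℕ) (K z : ℂ) (hzp : z ^ p = 1) :
    ((-(X ^ p - 1) ^ 2 * C K) : Polynomial ℂ).eval z = 0 := by
  simp [hzp]

lemma stepA (a : ℕ → Polynomial ℤ) (ha : qGauss a) {p : ℕ} (hp : p.Prime) :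
    ∀ m : ℕ, 1 ≤ m → ∀ z : ℂ, z ^ p = 1 → z ≠ 1 →
      Polynomial.aeval z (a (m * p)) = Polynomial.aeval (1 : ℂ) (a m) := by
  haveI : Fact p.Prime := ⟨hp⟩
  intro m
  induction m using Nat.strong_induction_on with
  | _ m IH =>
  intro hm z hzp hz1
  have hp0 : 0 < p := hp.pos
  have hm0 : m ≠ 0 := by omega
  have hmp0 : 0 < m * p := Nat.mul_pos (by omega) hp0
  have hordz : orderOf z = p := orderOf_eq_prime hzp hz1
  have hzd : ∀ i : ℕ, p ∣ i → z ^ i = 1 := by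
    rintro i ⟨k, rfl⟩
    rw [pow_mul, hzp, one_pow]
  -- evaluate the Gauss sum at z
  obtain ⟨t, ht⟩ := ha (m * p) hmp0
  have hq0 : Polynomial.aeval z (qInt (m * p)) = 0 := by
    rw [qInt]
    simp only [map_sum, map_pow, aeval_X]
    exact geom_sum_root (hzd _ ⟨m, mul_comm m p⟩) hz1
  have hsum0 : ∑ d ∈ (m * p).divisors,
      ((ArithmeticFunction.moebius d : ℤ) : ℂ) * Polynomial.aeval (z ^ d) (a ((m * p) / d)) = 0 := by
    have := congrArg (Polynomial.aeval z) ht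
    rw [map_mul, hq0, zero_mul, map_sum] at this
    rw [← this]
    refine Finset.sum_congr rfl fun d _ => ?_
    rw [map_mul, aeval_C, aeval_comp, map_pow, aeval_X]
    norm_num
  -- split the divisors
  set v : ℕ → ℂ := fun k => Polynomial.aeval (1 : ℂ) (a k) with hv
  set f : ℕ → ℂ := fun d =>
    ((ArithmeticFunction.moebius d : ℤ) : ℂ) * Polynomial.aeval (z ^ d) (a ((m * p) / d)) with hf
  have hfil1 : (m * p).divisors.filter (fun d => ¬ p ∣ d)
      = m.divisors.filter (fun d => ¬ p ∣ d) := by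
    ext d
    simp only [Finset.mem_filter, Nat.mem_divisors]
    constructor
    · rintro ⟨⟨hdvd, _⟩, hnd⟩
      exact ⟨⟨(Nat.Coprime.dvd_of_dvd_mul_right ((hp.coprime_iff_not_dvd.mpr hnd).symm) hdvd),
        hm0⟩, hnd⟩
    · rintro ⟨⟨hdvd, _⟩, hnd⟩
      exact ⟨⟨hdvd.mul_right p, hmp0.ne'⟩, hnd⟩
  have hfil2 : (m * p).divisors.filter (fun d => p ∣ d)
      = m.divisors.image (fun e => p * e) := by
    ext d
    simp only [Finset.mem_filter, Nat.mem_divisors, Finset.mem_image]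
    constructor
    · rintro ⟨⟨hdvd, _⟩, e, rfl⟩
      refine ⟨e, ⟨?_, hm0⟩, rfl⟩
      have : p * e ∣ p * m := by rwa [mul_comm m p] at hdvd
      exact (mul_dvd_mul_iff_left hp0.ne').mp this
    · rintro ⟨e, ⟨he, _⟩, rfl⟩
      refine ⟨⟨?_, hmp0.ne'⟩, ⟨e, rfl⟩⟩
      rw [mul_comm m p]
      exact mul_dvd_mul_left p he
  have hsplit : ∑ d ∈ (m * p).divisors, f d
      = ∑ d ∈ m.divisors.filter (fun d => ¬ p ∣ d), f d + ∑ e ∈ m.divisors, f (p * e) := by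
    rw [← Finset.sum_filter_add_sum_filter_not (m * p).divisors (fun d => p ∣ d) f, hfil1, hfil2,
      Finset.sum_image (fun x _ y _ h => Nat.eq_of_mul_eq_mul_left hp0 h)]
    ring
  -- second sum
  have hterm2 : ∀ e ∈ m.divisors, f (p * e)
      = (if p ∣ e then 0 else -(((ArithmeticFunction.moebius e : ℤ) : ℂ))) * v (m / e) := by
    intro e he
    rw [Nat.mem_divisors] at he
    have he0 : e ≠ 0 := fun h => hm0 (by simpa [h] using he.1)
    have hez : z ^ (p * e) = 1 := hzd _ ⟨e, rfl⟩
    have hdiv : (m * p) / (p * e) = m / e := by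
      rw [mul_comm p e]
      exact Nat.mul_div_mul_right _ _ hp0
    rw [hf]
    simp only []
    rw [hez, hdiv]
    by_cases hpe : p ∣ e
    · have : ¬ Squarefree (p * e) := by
        intro hs
        exact hp.ne_one (Nat.isUnit_iff.mp (hs p (mul_dvd_mul_left p hpe)))
      rw [ArithmeticFunction.moebius_eq_zero_of_not_squarefree this]
      simp [hpe, hv]
    · rw [ArithmeticFunction.isMultiplicative_moebius.map_mul_of_coprime
        (hp.coprime_iff_not_dvd.mpr hpe), ArithmeticFunction.moebius_apply_prime hp]
      simp [hpe, hv]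
  have hsum2 : ∑ e ∈ m.divisors, f (p * e)
      = -∑ e ∈ m.divisors.filter (fun d => ¬ p ∣ d),
          ((ArithmeticFunction.moebius e : ℤ) : ℂ) * v (m / e) := by
    rw [Finset.sum_congr rfl hterm2, Finset.sum_filter]
    rw [← Finset.sum_neg_distrib]
    refine Finset.sum_congr rfl fun e _ => ?_
    by_cases hpe : p ∣ e <;> simp [hpe]
  -- first sum via IH
  have h1T : (1 : ℕ) ∈ m.divisors.filter (fun d => ¬ p ∣ d) := by
    simp only [Finset.mem_filter, Nat.mem_divisors]
    exact ⟨⟨one_dvd m, hm0⟩, fun h => hp.ne_one (Nat.dvd_one.mp h)⟩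
  set T := m.divisors.filter (fun d => ¬ p ∣ d) with hT
  have hterm1 : ∀ d ∈ T.erase 1, f d = ((ArithmeticFunction.moebius d : ℤ) : ℂ) * v (m / d) := by
    intro d hd
    have hd1 : d ≠ 1 := Finset.ne_of_mem_erase hd
    have hdT := Finset.mem_of_mem_erase hd
    rw [hT, Finset.mem_filter, Nat.mem_divisors] at hdT
    obtain ⟨⟨hdm, _⟩, hnd⟩ := hdT
    obtain ⟨k, rfl⟩ := hdm
    have hd0 : 0 < d := by
      rcases Nat.eq_zero_or_pos d with h | h
      · exact absurd (by simp [h]) hm0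
      · exact h
    have h2d : 2 ≤ d := by omega
    have hk0 : 0 < k := by
      rcases Nat.eq_zero_or_pos k with h | h
      · exact absurd (by simp [h]) hm0
      · exact h
    have hzd1 : z ^ d ≠ 1 := by
      intro h
      exact hnd (hordz ▸ orderOf_dvd_iff_pow_eq_one.mpr h)
    have hzdp : (z ^ d) ^ p = 1 := by
      rw [← pow_mul, mul_comm, pow_mul, hzp, one_pow]
    have hlt : k < d * k := by nlinarith
    have hIH := IH k hlt hk0 (z ^ d) hzdp hzd1
    have hdivq : d * k * p / d = k * p := by
      rw [mul_assoc, Nat.mul_div_cancel_left _ hd0]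
    have hdivq2 : d * k / d = k := Nat.mul_div_cancel_left _ hd0
    rw [hf]
    simp only []
    rw [hdivq, hdivq2, hIH]
  have hmu1 : ((ArithmeticFunction.moebius 1 : ℤ) : ℂ) = 1 := by
    simp [ArithmeticFunction.moebius_apply_one]
  have hf1 : f 1 = Polynomial.aeval z (a (m * p)) := by
    rw [hf]
    simp only []
    rw [hmu1, pow_one, Nat.div_one, one_mul]
  have hfirst : ∑ d ∈ T, f d = f 1 + ∑ d ∈ T.erase 1, f d :=
    (Finset.add_sum_erase T f h1T).symm
  have hsecondT : ∑ e ∈ T, ((ArithmeticFunction.moebius e : ℤ) : ℂ) * v (m / e)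
      = v m + ∑ d ∈ T.erase 1, ((ArithmeticFunction.moebius d : ℤ) : ℂ) * v (m / d) := by
    rw [(Finset.add_sum_erase T (fun e => ((ArithmeticFunction.moebius e : ℤ) : ℂ) * v (m / e))
      h1T).symm]
    rw [hmu1, Nat.div_one, one_mul]
  have hz0 : Polynomial.aeval z (a (m * p)) - v m = 0 := by
    have := hsum0
    rw [show (m * p).divisors.sum f = ∑ d ∈ (m * p).divisors, f d from rfl] at this
    rw [hsplit, hsum2, hfirst, Finset.sum_congr rfl hterm1, hsecondT, hf1] at this
    ring_nf at this ⊢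
    linear_combination this
  have : Polynomial.aeval z (a (m * p)) = v m := by linear_combination hz0
  exact this


/-- If `{a_n(q)}` satisfies the `q`-Gauss congruences, `ω a_n'(ω) = ord(ω)² a'_{n/ord(ω)}(1)`,
and `ω² a_n''(ω) = ord(ω)⁴ b_{n/ord(ω)} + ord(ω)² c_{n/ord(ω)}` at all `n`-th roots of unity,
then for every prime `p ≥ 5` and `n ≥ 1`,
`a_{np}(q) - a_n(q^{p²}) ≡ -(q^p-1)² ((p²-1)/2)(c_n + a_n'(1)) mod [p]_q³`,
and in particular `a_{np}(1) ≡ a_n(1) mod p³`. -/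
theorem stmt19 (a : ℕ → Polynomial ℤ) (ha : qGauss a)
    (h1 : ∀ n : ℕ, 1 ≤ n → ∀ ω : ℂ, ω ^ n = 1 →
      ω * Polynomial.aeval ω (Polynomial.derivative (a n))
        = (orderOf ω : ℂ) ^ 2
            * Polynomial.aeval (1 : ℂ) (Polynomial.derivative (a (n / orderOf ω))))
    (b c : ℕ → ℂ)
    (h2 : ∀ n : ℕ, 1 ≤ n → ∀ ω : ℂ, ω ^ n = 1 →
      ω ^ 2 * Polynomial.aeval ω (Polynomial.derivative (Polynomial.derivative (a n)))
        = (orderOf ω : ℂ) ^ 4 * b (n / orderOf ω) + (orderOf ω : ℂ) ^ 2 * c (n / orderOf ω))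
    (p : ℕ) (hp : p.Prime) (hp5 : 5 ≤ p) (n : ℕ) (hn : 1 ≤ n) :
    (qIntC p) ^ 3 ∣
      ((a (n * p)).map (Int.castRingHom ℂ)
        - ((a n).map (Int.castRingHom ℂ)).comp (X ^ (p ^ 2))
        - (-(X ^ p - 1) ^ 2 * Polynomial.C ((((p : ℂ) ^ 2 - 1) / 2)
            * (c n + Polynomial.aeval (1 : ℂ) (Polynomial.derivative (a n))))))
    ∧ (p : ℤ) ^ 3 ∣ (a (n * p)).eval 1 - (a n).eval 1 := by
  haveI : Fact p.Prime := ⟨hp⟩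
  have hp0 : 0 < p := hp.pos
  have hnp1 : 1 ≤ n * p := Nat.one_le_iff_ne_zero.mpr (Nat.mul_ne_zero (by omega) hp0.ne')
  have hpm2 : 2 ≤ p ^ 2 := by nlinarith
  set α : ℂ := Polynomial.aeval (1 : ℂ) (Polynomial.derivative (a n)) with hα
  set K : ℂ := (((p : ℂ) ^ 2 - 1) / 2) * (c n + α) with hK
  set A : Polynomial ℂ := (a (n * p)).map (Int.castRingHom ℂ) with hA
  set u : Polynomial ℂ := (a n).map (Int.castRingHom ℂ) with hu
  set Bp : Polynomial ℂ := u.comp (X ^ p ^ 2) with hBp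
  set P3 : Polynomial ℂ := -(X ^ p - 1) ^ 2 * C K with hP3
  have hβ : Polynomial.aeval (1 : ℂ) (derivative (derivative (a n))) = b n + c n := by
    have := h2 n hn 1 (one_pow n)
    simpa [orderOf_one] using this
  -- pointwise triple vanishing
  have key : ∀ z : ℂ, z ^ p = 1 → z ≠ 1 →
      (A - Bp - P3).eval z = 0 ∧ (derivative (A - Bp - P3)).eval z = 0 ∧
        (derivative (derivative (A - Bp - P3))).eval z = 0 := by
    intro z hzp hz1
    have hordz : orderOf z = p := orderOf_eq_prime hzp hz1
    have hz0 : z ≠ 0 := by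
      intro h
      rw [h, zero_pow hp0.ne'] at hzp
      exact zero_ne_one hzp
    have hm2 : z ^ (p ^ 2) = 1 := by rw [sq, pow_mul, hzp, one_pow]
    have hznp : z ^ (n * p) = 1 := by rw [mul_comm n p, pow_mul, hzp, one_pow]
    obtain ⟨hq1, hq2, hq3⟩ := pow_helper hpm2 hm2
    have hAz : A.eval z = u.eval 1 := by
      rw [hA, hu, ← aeval_eq_eval_map, ← aeval_eq_eval_map]
      exact stepA a ha hp n hn z hzp hz1
    have hBz : Bp.eval z = u.eval 1 := by rw [hBp, eval_comp, eval_pow, eval_X, hm2]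
    have hdA : derivative A = (derivative (a (n * p))).map (Int.castRingHom ℂ) := by
      rw [hA, derivative_map]
    have hddA : derivative (derivative A)
        = (derivative (derivative (a (n * p)))).map (Int.castRingHom ℂ) := by
      rw [hdA, derivative_map]
    have hdu1 : (derivative u).eval 1 = α := by
      rw [hu, derivative_map, ← aeval_eq_eval_map]
    have hddu1 : (derivative (derivative u)).eval 1 = b n + c n := by
      rw [hu, derivative_map, derivative_map, ← aeval_eq_eval_map]
      exact hβ
    have hA1 : z * (derivative A).eval z = (p:ℂ)^2 * α := by
      have h := h1 (n * p) hnp1 z hznp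
      rw [hordz, Nat.mul_div_cancel n hp0] at h
      rw [hdA, ← aeval_eq_eval_map]
      rw [h, hα]
    have hA2 : z^2 * (derivative (derivative A)).eval z = (p:ℂ)^4 * b n + (p:ℂ)^2 * c n := by
      have h := h2 (n * p) hnp1 z hznp
      rw [hordz, Nat.mul_div_cancel n hp0] at h
      rw [hddA, ← aeval_eq_eval_map]
      exact h
    have hB1 : z * (derivative Bp).eval z = (p:ℂ)^2 * α := by
      rw [hBp, eval_d_comp_pow, hm2, hdu1]
      push_cast
      linear_combination ((p:ℂ)^2 * α) * hq2
    have hB2 : z^2 * (derivative (derivative Bp)).eval z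
        = (p:ℂ)^2 * ((p:ℂ)^2 - 1) * α + (p:ℂ)^4 * (b n + c n) := by
      rw [hBp, eval_dd_comp_pow, hm2, hdu1, hddu1]
      rw [Nat.cast_sub (by nlinarith : 1 ≤ p ^ 2)]
      push_cast
      linear_combination ((p:ℂ)^2 * ((p:ℂ)^2 - 1) * α) * hq1 + ((p:ℂ)^4 * (b n + c n)) * hq3
    refine ⟨?_, ?_, ?_⟩
    · rw [eval_sub, eval_sub, hAz, hBz, hP3, P3_e p K z hzp]
      ring
    · have hsum : z * (derivative (A - Bp - P3)).eval z = 0 := by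
        rw [derivative_sub, derivative_sub, eval_sub, eval_sub, hP3, P3_d p K z hzp]
        linear_combination hA1 - hB1
      rcases mul_eq_zero.mp hsum with h | h
      · exact absurd h hz0
      · exact h
    · have hK2 : 2 * K = ((p:ℂ)^2 - 1) * (c n + α) := by rw [hK]; ring
      have hP3dd : z^2 * (derivative (derivative P3)).eval z = -2*(p:ℂ)^2*K := by
        rw [hP3]
        exact P3_dd p hp.one_le K z hzp
      have hsum : z^2 * (derivative (derivative (A - Bp - P3))).eval z = 0 := by
        rw [derivative_sub, derivative_sub, derivative_sub, derivative_sub, eval_sub, eval_sub]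
        linear_combination hA2 - hB2 - hP3dd + (p:ℂ)^2 * hK2
      rcases mul_eq_zero.mp hsum with h | h
      · exact absurd h (pow_ne_zero 2 hz0)
      · exact h
  -- product of (X - z)^3 over nontrivial p-th roots of unity
  obtain ⟨ξ, hξ⟩ : ∃ ξ : ℂ, IsPrimitiveRoot ξ p := ⟨_, Complex.isPrimitiveRoot_exp p hp0.ne'⟩
  have hξp : ξ ^ p = 1 := hξ.pow_eq_one
  have hmonoC : (qIntC p).Monic := by
    rw [qIntC]
    exact monic_geom_sum_X hp0.ne'
  have hqCne : qIntC p ≠ 0 := hmonoC.ne_zero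
  have hfac : (X : Polynomial ℂ) ^ p - 1 = qIntC p * (X - 1) := by
    rw [qIntC]
    exact (geom_sum_mul _ _).symm
  have h1mem : (1 : ℂ) ∈ nthRootsFinset p (1 : ℂ) := (mem_nthRootsFinset hp0 (1 : ℂ)).mpr (one_pow p)
  have hqprod : qIntC p = ∏ z ∈ (nthRootsFinset p (1 : ℂ)).erase 1, (X - C z) := by
    have h2' : ((X : Polynomial ℂ) - C 1) * ∏ z ∈ (nthRootsFinset p (1 : ℂ)).erase 1, (X - C z)
        = (X : Polynomial ℂ) ^ p - 1 := by
      rw [X_pow_sub_one_eq_prod hp0 hξ]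
      exact Finset.mul_prod_erase (nthRootsFinset p (1 : ℂ)) (fun z => X - C z) h1mem
    have h3' : ((X : Polynomial ℂ) - C 1) * qIntC p = (X : Polynomial ℂ) ^ p - 1 := by
      rw [hfac, map_one]
      ring
    exact mul_left_cancel₀ (X_sub_C_ne_zero 1) (h3'.trans h2'.symm)
  have hdvd3 : qIntC p ^ 3 ∣ A - Bp - P3 := by
    rw [hqprod, ← Finset.prod_pow]
    refine Finset.prod_dvd_of_coprime ?_ ?_
    · intro x hx y hy hxy
      exact (isCoprime_X_sub_C_of_isUnit_sub ((sub_ne_zero.mpr hxy).isUnit)).pow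
    · intro z hz
      have hzz := (mem_nthRootsFinset hp0 (1 : ℂ)).mp (Finset.mem_of_mem_erase hz)
      have hz1 : z ≠ 1 := Finset.ne_of_mem_erase hz
      obtain ⟨e0, e1, e2⟩ := key z hzz hz1
      exact cube_dvd e0 e1 e2
  refine ⟨hdvd3, ?_⟩
  -- part 2 : integer congruence
  have hABdvd : qIntC p ^ 2 ∣ A - Bp := by
    have h5 : qIntC p ^ 2 ∣ P3 := by
      refine ⟨-(X - 1) ^ 2 * C K, ?_⟩
      rw [hP3, hfac]
      ring
    have h6 : qIntC p ^ 2 ∣ A - Bp - P3 := dvd_trans (pow_dvd_pow _ (by norm_num)) hdvd3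
    have h7 : A - Bp = (A - Bp - P3) + P3 := by ring
    rw [h7]
    exact dvd_add h6 h5
  have hφq : (qInt p).map (Int.castRingHom ℂ) = qIntC p := by
    rw [qInt, qIntC, Polynomial.map_sum]
    simp
  have hmono : (qInt p).Monic := by
    rw [qInt]
    exact monic_geom_sum_X hp0.ne'
  have hGdvd : qInt p ^ 2 ∣ a (n * p) - (a n).comp (X ^ p ^ 2) := by
    have hm2C : ((qInt p) ^ 2).Monic := hmono.pow 2
    rw [← modByMonic_eq_zero_iff_dvd hm2C]
    have hmm := map_modByMonic (Int.castRingHom ℂ) hm2C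
      (p := a (n * p) - (a n).comp (X ^ p ^ 2))
    have hmapG : (a (n * p) - (a n).comp (X ^ p ^ 2)).map (Int.castRingHom ℂ) = A - Bp := by
      rw [Polynomial.map_sub, Polynomial.map_comp, Polynomial.map_pow, map_X, hA, hBp, hu]
    rw [hmapG, Polynomial.map_pow, hφq] at hmm
    have : (A - Bp) %ₘ (qIntC p ^ 2) = 0 :=
      (modByMonic_eq_zero_iff_dvd (hmonoC.pow 2)).mpr hABdvd
    rw [this] at hmm
    exact (Polynomial.map_eq_zero_iff Int.cast_injective).mp hmm
  obtain ⟨R, hR⟩ := hGdvd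
  -- relation satisfied by R at roots of unity
  obtain ⟨S, hS⟩ := hdvd3
  have hmapAB : A - Bp = qIntC p ^ 2 * (R.map (Int.castRingHom ℂ)) := by
    have := congrArg (fun q => q.map (Int.castRingHom ℂ)) hR
    simp only [Polynomial.map_sub, Polynomial.map_mul, Polynomial.map_comp, Polynomial.map_pow,
      map_X] at this
    rw [hφq] at this
    rw [hA, hBp, hu]
    exact this
  have hcancel : (R.map (Int.castRingHom ℂ)) + (X - 1) ^ 2 * C K = qIntC p * S := by
    have h8 : qIntC p ^ 2 * ((R.map (Int.castRingHom ℂ)) + (X - 1) ^ 2 * C K)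
        = qIntC p ^ 2 * (qIntC p * S) := by
      have h9 : qIntC p ^ 2 * (qIntC p * S) = qIntC p ^ 3 * S := by ring
      rw [h9, ← hS, hmapAB, hP3, hfac]
      ring
    exact mul_left_cancel₀ (pow_ne_zero 2 hqCne) h8
  have hRz : ∀ z : ℂ, z ^ p = 1 → z ≠ 1 →
      (R.map (Int.castRingHom ℂ)).eval z = -(z - 1) ^ 2 * K := by
    intro z hzp hz1
    have := congrArg (eval z) hcancel
    simp only [eval_add, eval_mul, eval_pow, eval_sub, eval_X, eval_one, eval_C] at this
    rw [qIntC_eval, geom_sum_root hzp hz1, zero_mul] at this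
    linear_combination this
  -- sum over all p-th roots of unity, two ways
  set N : ℕ := (R.map (Int.castRingHom ℂ)).natDegree + 1 with hN
  set M : ℤ := ∑ i ∈ Finset.range N, if p ∣ (i + 1) then R.coeff i else 0 with hM
  have hgeo1 : ∀ j : ℕ, 0 < j → j < p → ∑ k ∈ Finset.Ico 1 p, (ξ^j)^k = -1 := by
    intro j hj hjp
    have hne : ξ^j ≠ 1 := hξ.pow_ne_one_of_pos_of_lt hj.ne' hjp
    have hpp : (ξ^j)^p = 1 := by rw [← pow_mul, mul_comm, pow_mul, hξp, one_pow]
    have h0 := geom_sum_root hpp hne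
    rw [Finset.range_eq_Ico, Finset.sum_eq_sum_Ico_succ_bot hp0] at h0
    rw [pow_zero] at h0
    linear_combination h0
  have hT1 : ∑ k ∈ Finset.range p, ξ^k * (R.map (Int.castRingHom ℂ)).eval (ξ^k)
      = ((R.eval 1 : ℤ) : ℂ) := by
    rw [Finset.range_eq_Ico, Finset.sum_eq_sum_Ico_succ_bot hp0]
    have hterm : ∀ k ∈ Finset.Ico 1 p,
        ξ^k * (R.map (Int.castRingHom ℂ)).eval (ξ^k)
          = (-K) * ((ξ^3)^k - 2*(ξ^2)^k + (ξ^1)^k) := by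
      intro k hk
      rw [Finset.mem_Ico] at hk
      have hk1 : ξ^k ≠ 1 := hξ.pow_ne_one_of_pos_of_lt (by omega) hk.2
      have hkp : (ξ^k)^p = 1 := by rw [← pow_mul, mul_comm, pow_mul, hξp, one_pow]
      rw [hRz _ hkp hk1]
      have e3 : (ξ^3)^k = (ξ^k)^3 := by rw [← pow_mul, mul_comm, pow_mul]
      have e2 : (ξ^2)^k = (ξ^k)^2 := by rw [← pow_mul, mul_comm, pow_mul]
      rw [e3, e2, pow_one]
      ring
    rw [Finset.sum_congr rfl hterm, ← Finset.mul_sum]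
    have expand : ∑ k ∈ Finset.Ico 1 p, ((ξ^3)^k - 2*(ξ^2)^k + (ξ^1)^k)
        = (∑ k ∈ Finset.Ico 1 p, (ξ^3)^k) - 2*(∑ k ∈ Finset.Ico 1 p, (ξ^2)^k)
          + ∑ k ∈ Finset.Ico 1 p, (ξ^1)^k := by
      rw [Finset.sum_add_distrib, Finset.sum_sub_distrib, Finset.mul_sum]
    rw [expand, hgeo1 3 (by norm_num) (by omega), hgeo1 2 (by norm_num) (by omega),
      hgeo1 1 (by norm_num) (by omega)]
    rw [pow_zero, one_mul, map_eval_one]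
    ring
  have hT2 : ∑ k ∈ Finset.range p, ξ^k * (R.map (Int.castRingHom ℂ)).eval (ξ^k)
      = (p : ℂ) * ((M : ℤ) : ℂ) := by
    have heval : ∀ k : ℕ, (R.map (Int.castRingHom ℂ)).eval (ξ^k)
        = ∑ i ∈ Finset.range N, ((R.coeff i : ℤ) : ℂ) * (ξ^k)^i := by
      intro k
      rw [hN, eval_eq_sum_range]
      refine Finset.sum_congr rfl fun i _ => ?_
      rw [coeff_map]
      rfl
    calc ∑ k ∈ Finset.range p, ξ^k * (R.map (Int.castRingHom ℂ)).eval (ξ^k)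
        = ∑ k ∈ Finset.range p, ∑ i ∈ Finset.range N,
            ((R.coeff i : ℤ) : ℂ) * (ξ^(i+1))^k := by
          refine Finset.sum_congr rfl fun k _ => ?_
          rw [heval k, Finset.mul_sum]
          refine Finset.sum_congr rfl fun i _ => ?_
          have : (ξ^(i+1))^k = ξ^k * (ξ^k)^i := by
            rw [← pow_mul, show (i+1)*k = k + k*i by ring, pow_add, pow_mul]
          rw [this]
          ring
      _ = ∑ i ∈ Finset.range N, ((R.coeff i : ℤ) : ℂ) * ∑ k ∈ Finset.range p, (ξ^(i+1))^k := by
          rw [Finset.sum_comm]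
          exact Finset.sum_congr rfl fun i _ => by rw [Finset.mul_sum]
      _ = ∑ i ∈ Finset.range N, (if p ∣ (i+1) then (p:ℂ) * ((R.coeff i : ℤ) : ℂ) else 0) := by
          refine Finset.sum_congr rfl fun i _ => ?_
          by_cases hd : p ∣ (i + 1)
          · have hone : ξ^(i+1) = 1 := (hξ.pow_eq_one_iff_dvd (i+1)).mpr hd
            simp [hone, hd]
            ring
          · have hne : ξ^(i+1) ≠ 1 := fun h => hd ((hξ.pow_eq_one_iff_dvd _).mp h)
            have hpp : (ξ^(i+1))^p = 1 := by rw [← pow_mul, mul_comm, pow_mul, hξp, one_pow]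
            simp [hd, geom_sum_root hpp hne]
      _ = (p : ℂ) * ((M : ℤ) : ℂ) := by
          rw [hM]
          push_cast
          rw [Finset.mul_sum]
          refine Finset.sum_congr rfl fun i _ => ?_
          by_cases hd : p ∣ (i + 1) <;> simp [hd]
  have hfin : (R.eval 1 : ℤ) = p * M := by
    have hc : ((R.eval 1 : ℤ) : ℂ) = ((p * M : ℤ) : ℂ) := by
      rw [← hT1, hT2]
      push_cast
      ring
    exact_mod_cast hc
  have hG1 : (a (n * p)).eval 1 - (a n).eval 1 = (p:ℤ)^2 * R.eval 1 := by
    have h10 := congrArg (Polynomial.eval (1:ℤ)) hR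
    rw [eval_sub, eval_comp, eval_pow, eval_X, one_pow, eval_mul, eval_pow] at h10
    have hq1 : (qInt p).eval 1 = (p:ℤ) := by
      rw [qInt]
      simp
    rw [hq1] at h10
    exact h10
  refine ⟨M, ?_⟩
  rw [hG1, hfin]
  ring
end
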